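/- The region R(p_K,W) is a closed convex subset of the nonnegative quadrant ℝ₊² = {(R_A,R) : R_A ≥ 0, R ≥ 0}. -/

import Mathlib

open scoped BigOperators
open Real Classical

namespace SCA

noncomputable section

/-- `p` is a probability distribution on the finite type `A`. -/
def IsDist {A : Type} [Fintype A] (p : A → ℝ) : Prop :=
  (∀ a, 0 ≤ p a) ∧ ∑ a, p a = 1

/-- `W` is a (stochastic-matrix) channel from `A` to `B`. -/
def IsChannel {A B : Type} [Fintype A] [Fintype B] (W : A → B → ℝ) : Prop :=
  ∀ a, IsDist (W a)

/-- Shannon entropy (natural logarithm). -/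
def ent {A : Type} [Fintype A] (p : A → ℝ) : ℝ :=
  ∑ a, Real.negMulLog (p a)

/-- Kullback–Leibler divergence between finitely supported distributions. -/
def relEnt {A : Type} [Fintype A] (q p : A → ℝ) : ℝ :=
  ∑ a, q a * Real.log (q a / p a)

/-- First marginal of a joint distribution on `A × B`. -/
def fst2 {A B : Type} [Fintype A] [Fintype B] (p : A × B → ℝ) : A → ℝ :=
  fun a => ∑ b, p (a, b)

/-- Second marginal of a joint distribution on `A × B`. -/
def snd2 {A B : Type} [Fintype A] [Fintype B] (p : A × B → ℝ) : B → ℝ :=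
  fun b => ∑ a, p (a, b)

/-- Mutual information `I(A;B)` of a joint distribution on `A × B`. -/
def mutInfo {A B : Type} [Fintype A] [Fintype B] (p : A × B → ℝ) : ℝ :=
  ent (fst2 p) + ent (snd2 p) - ent p

/-- Conditional entropy `H(B|A)` of a joint distribution on `A × B`. -/
def condEnt {A B : Type} [Fintype A] [Fintype B] (p : A × B → ℝ) : ℝ :=
  ent p - ent (fst2 p)

section Triple

variable {U Z X : Type} [Fintype U] [Fintype Z] [Fintype X]

/-- `(U,Z)`-marginal of a joint distribution on `U × Z × K`. -/
def margUZ (q : U × Z × X → ℝ) : U × Z → ℝ := fun p => ∑ k, q (p.1, p.2, k)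

/-- `(U,K)`-marginal of a joint distribution on `U × Z × K`. -/
def margUK (q : U × Z × X → ℝ) : U × X → ℝ := fun p => ∑ z, q (p.1, z, p.2)

/-- `(Z,K)`-marginal of a joint distribution on `U × Z × K`. -/
def margZK (q : U × Z × X → ℝ) : Z × X → ℝ := fun p => ∑ u, q (u, p.1, p.2)

/-- `U`-marginal. -/
def margU (q : U × Z × X → ℝ) : U → ℝ := fun u => ∑ z, ∑ k, q (u, z, k)

/-- `Z`-marginal. -/
def margZ (q : U × Z × X → ℝ) : Z → ℝ := fun z => ∑ u, ∑ k, q (u, z, k)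

/-- `K`-marginal. -/
def margK (q : U × Z × X → ℝ) : X → ℝ := fun k => ∑ u, ∑ z, q (u, z, k)

/-- Markov chain condition `U ↔ Z ↔ K` for a joint distribution on `U × Z × K`:
`U` and `K` are conditionally independent given `Z`. -/
def Markov (q : U × Z × X → ℝ) : Prop :=
  ∀ u z k, q (u, z, k) * margZ q z = margUZ q (u, z) * margZK q (z, k)

end Triple

/-- The region `𝓡(p_K, W)`: the union over all joint distributions `p_{UZK}` with
`|𝓤| ≤ |𝓩| + 1`, Markov chain `U ↔ Z ↔ K` and `(Z,K)`-marginal `p_{KZ}`, of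
`{(R_A, R) ∈ ℝ₊² : R_A ≥ I(Z;U), R ≥ H(K|U)}`. -/
def Region {X Z : Type} [Fintype X] [Fintype Z] (pK : X → ℝ) (W : X → Z → ℝ) :
    Set (ℝ × ℝ) :=
  { r | ∃ m : ℕ, m ≤ Fintype.card Z + 1 ∧ ∃ q : Fin m × Z × X → ℝ,
      IsDist q ∧ Markov q ∧ (∀ z k, margZK q (z, k) = pK k * W k z) ∧
      0 ≤ r.1 ∧ 0 ≤ r.2 ∧ mutInfo (margUZ q) ≤ r.1 ∧ condEnt (margUK q) ≤ r.2 }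

/-- The reliability exponent `E(R|p_X)`:
minimum over distributions `p̄` of `[R − H(p̄)]⁺ + D(p̄‖p_X)`. -/
def Eexp {X : Type} [Fintype X] (R : ℝ) (pX : X → ℝ) : ℝ :=
  sInf { y | ∃ q : X → ℝ, IsDist q ∧ (∀ x, pX x = 0 → q x = 0) ∧
    y = max (R - ent q) 0 + relEnt q pX }

/-- i.i.d. (product) distribution on `n`-sequences. -/
def iid {A : Type} [Fintype A] (p : A → ℝ) (n : ℕ) : (Fin n → A) → ℝ :=
  fun x => ∏ i, p (x i)

/-- Memoryless channel `W^n`. -/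
def wn {X Z : Type} (W : X → Z → ℝ) {n : ℕ} (k : Fin n → X) (z : Fin n → Z) : ℝ :=
  ∏ i, W (k i) (z i)

/-- Joint distribution `p_{K^n Z^n}(k,z) = p_K^n(k) W^n(z|k)`. -/
def muKZ {X Z : Type} [Fintype X] (pK : X → ℝ) (W : X → Z → ℝ) {n : ℕ}
    (k : Fin n → X) (z : Fin n → Z) : ℝ :=
  iid pK n k * wn W k z

/-- The affine encoder `φ⁽ⁿ⁾(k) = kA ⊕ bᵐ`. -/
def affEnc {X : Type} [Field X] [Fintype X] {n m : ℕ}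
    (A : Matrix (Fin n) (Fin m) X) (b : Fin m → X) : (Fin n → X) → (Fin m → X) :=
  fun k => Matrix.vecMul k A + b

/-- The linear part `φ⁰(x) = xA` of the affine encoder. -/
def linEnc {X : Type} [Field X] [Fintype X] {n m : ℕ}
    (A : Matrix (Fin n) (Fin m) X) : (Fin n → X) → (Fin m → X) :=
  fun x => Matrix.vecMul x A

/-- Decoding error probability `p_e(φ⁰, ψ⁽ⁿ⁾ | p_X^n) = Pr[ψ⁽ⁿ⁾(φ⁰(Xⁿ)) ≠ Xⁿ]`. -/
def perr {X : Type} [Field X] [Fintype X] {n m : ℕ}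
    (A : Matrix (Fin n) (Fin m) X) (ψ : (Fin m → X) → (Fin n → X)) (pX : X → ℝ) : ℝ :=
  ∑ x : Fin n → X, if ψ (linEnc A x) = x then 0 else iid pX n x

/-- Information leakage `Δ⁽ⁿ⁾ = I(Xⁿ; φ⁽ⁿ⁾(Xⁿ ⊕ Kⁿ), φ_A⁽ⁿ⁾(Zⁿ))`, computed from the joint
distribution of `(Xⁿ, (C̃ᵐ, M_A))` where `Xⁿ ⊥ (Kⁿ, Zⁿ)`. -/
def leakage {X Z M : Type} [Field X] [Fintype X] [Fintype Z] [Fintype M] {n m : ℕ}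
    (A : Matrix (Fin n) (Fin m) X) (b : Fin m → X) (φA : (Fin n → Z) → M)
    (pX pK : X → ℝ) (W : X → Z → ℝ) : ℝ :=
  mutInfo (fun p : (Fin n → X) × ((Fin m → X) × M) =>
    iid pX n p.1 * ∑ k : Fin n → X, ∑ z : Fin n → Z,
      if affEnc A b (p.1 + k) = p.2.1 ∧ φA z = p.2.2 then muKZ pK W k z else 0)

section Exponents

variable {X Z : Type} [Fintype X] [Fintype Z]

/-- `ω_{q|p_Z}^{(μ,α)}(z,k|u)`. -/
def omegaF {U : Type} [Fintype U] (μ α : ℝ) (pZb : Z → ℝ) (q : U × Z × X → ℝ)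
    (u : U) (z : Z) (k : X) : ℝ :=
  (1 - α) * Real.log (margZ q z / pZb z) +
    α * (μ * Real.log ((margUZ q (u, z) / margU q u) / pZb z) +
         (1 - μ) * Real.log (1 / (margUK q (u, k) / margU q u)))

/-- `Ω^{(μ,α)}(q|p_Z) = − log E_q[exp(−ω_{q|p_Z}^{(μ,α)}(Z,K|U))]`. -/
def OmegaQ {U : Type} [Fintype U] (μ α : ℝ) (pZb : Z → ℝ) (q : U × Z × X → ℝ) : ℝ :=
  - Real.log (∑ u, ∑ z, ∑ k, q (u, z, k) * Real.exp (-(omegaF μ α pZb q u z k)))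

/-- The condition `q_{K|Z} = p_{K̄|Z̄}` for a joint distribution `p_{K̄Z̄}` on `𝓚 × 𝓩`. -/
def CondMatch {U : Type} [Fintype U] (pbar : X × Z → ℝ) (q : U × Z × X → ℝ) : Prop :=
  ∀ z k, margZK q (z, k) * snd2 pbar z = margZ q z * pbar (k, z)

/-- `Ω^{(μ,α)}(p_{K̄Z̄}) = min_{q ∈ 𝓠(p_{K̄|Z̄})} Ω^{(μ,α)}(q | p_Z̄)`, with `|𝓤| ≤ |𝓩|`. -/
def BigOmega (μ α : ℝ) (pbar : X × Z → ℝ) : ℝ :=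
  sInf { y | ∃ m : ℕ, m ≤ Fintype.card Z ∧ ∃ q : Fin m × Z × X → ℝ,
    IsDist q ∧ Markov q ∧ CondMatch pbar q ∧ y = OmegaQ μ α (snd2 pbar) q }

/-- `F(R_A, R | p_{K̄Z̄}) = sup_{(μ,α)∈[0,1]²} (Ω^{(μ,α)} − α(μR_A + μ̄R))/(2 + αμ̄)`. -/
def Ffun (RA R : ℝ) (pbar : X × Z → ℝ) : ℝ :=
  sSup { y | ∃ μ ∈ Set.Icc (0:ℝ) 1, ∃ α ∈ Set.Icc (0:ℝ) 1,
    y = (BigOmega μ α pbar - α * (μ * RA + (1 - μ) * R)) / (2 + α * (1 - μ)) }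

/-- `G(R_A, R | p_{K̄Z̄}) = sup_{(μ,α)∈[0,1]²} (Ω^{(μ,α)} − α(μR_A + μ̄R))/(2 + 3αμ̄)`. -/
def Gfun (RA R : ℝ) (pbar : X × Z → ℝ) : ℝ :=
  sSup { y | ∃ μ ∈ Set.Icc (0:ℝ) 1, ∃ α ∈ Set.Icc (0:ℝ) 1,
    y = (BigOmega μ α pbar - α * (μ * RA + (1 - μ) * R)) / (2 + 3 * α * (1 - μ)) }

/-- The joint distribution `p_{KZ}(k,z) = p_K(k) W(z|k)` on `𝓚 × 𝓩`. -/
def pJoint (pK : X → ℝ) (W : X → Z → ℝ) : X × Z → ℝ :=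
  fun p => pK p.1 * W p.1 p.2

/-- `G(R_A, R | p_K, W) = min_{p_{K̄Z̄}} { G(R_A, R | p_{K̄Z̄}) + D(p_{K̄Z̄}‖p_{KZ}) }`. -/
def GfunKW (RA R : ℝ) (pK : X → ℝ) (W : X → Z → ℝ) : ℝ :=
  sInf { y | ∃ pbar : X × Z → ℝ, IsDist pbar ∧
    (∀ p, pJoint pK W p = 0 → pbar p = 0) ∧
    y = Gfun RA R pbar + relEnt pbar (pJoint pK W) }

end Exponents

section Types

/-- The type (empirical distribution) of a sequence. -/
def typeOf {S : Type} {n : ℕ} (x : Fin n → S) : S → ℝ :=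
  fun s => (({i | x i = s} : Set (Fin n)).ncard : ℝ) / n

/-- The joint type (empirical joint distribution) of a pair of sequences. -/
def jointType {X Z : Type} {n : ℕ} (k : Fin n → X) (z : Fin n → Z) : X × Z → ℝ :=
  fun p => (({i | k i = p.1 ∧ z i = p.2} : Set (Fin n)).ncard : ℝ) / n

/-- `p` is a joint type of length `n`, i.e. `p ∈ 𝓟_n(𝓧 × 𝓩)`. -/
def IsJointType {X Z : Type} (n : ℕ) (p : X × Z → ℝ) : Prop :=
  ∃ (k : Fin n → X) (z : Fin n → Z), jointType k z = p

variable {X Z M : Type} [Fintype X] [Fintype Z] [Fintype M]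

/-- i.i.d. distribution on pairs of sequences. -/
def iid2 (pbar : X × Z → ℝ) {n : ℕ} (k : Fin n → X) (z : Fin n → Z) : ℝ :=
  ∏ i, pbar (k i, z i)

/-- The quantity `Υ(R, φ_A⁽ⁿ⁾ | p_{K̄Z̄})`. -/
def Upsilon {n : ℕ} (R : ℝ) (φA : (Fin n → Z) → M) (pbar : X × Z → ℝ) : ℝ :=
  ∑ a : M, ∑ k : Fin n → X,
    if typeOf k = fst2 pbar then
      ((({z | φA z = a ∧ jointType k z = pbar} : Set (Fin n → Z)).ncard : ℝ) /
        (({p : (Fin n → X) × (Fin n → Z) | jointType p.1 p.2 = pbar} :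
            Set ((Fin n → X) × (Fin n → Z))).ncard : ℝ)) *
      Real.log (1 + (Real.exp (n * R) - 1) *
        ((({z | φA z = a ∧ jointType k z = pbar} : Set (Fin n → Z)).ncard : ℝ) *
          (({k' : Fin n → X | typeOf k' = fst2 pbar} : Set (Fin n → X)).ncard : ℝ)) /
        ((({z | φA z = a ∧ typeOf z = snd2 pbar} : Set (Fin n → Z)).ncard : ℝ) *
          (({p : (Fin n → X) × (Fin n → Z) | jointType p.1 p.2 = pbar} :
              Set ((Fin n → X) × (Fin n → Z))).ncard : ℝ)))
    else 0

/-- `Υ(R, φ_A⁽ⁿ⁾ | p^n_{K̄Z̄}) = Σ_{p̂} Pr{M⁽ⁿ⁾ = p̂} Υ(R, φ_A⁽ⁿ⁾ | p̂)` where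
`(Kⁿ, Zⁿ) ∼ p^n_{K̄Z̄}` i.i.d. and `M⁽ⁿ⁾` is the random joint type, written as an
expectation over `(Kⁿ, Zⁿ)`. -/
def UpsilonIID {n : ℕ} (R : ℝ) (φA : (Fin n → Z) → M) (pbar : X × Z → ℝ) : ℝ :=
  ∑ k : Fin n → X, ∑ z : Fin n → Z, iid2 pbar k z * Upsilon R φA (jointType k z)

end Types

/-- `ζ(φ⁽ⁿ⁾, φ_A⁽ⁿ⁾ | p_{K̄Z̄})`: the conditional divergence
`D(p_{K̃ᵐ | M_A⁽ⁿ⁾, M⁽ⁿ⁾ = p_{K̄Z̄}} ‖ p_{Vᵐ} | p_{M_A⁽ⁿ⁾ | M⁽ⁿ⁾ = p_{K̄Z̄}})`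
of the distribution of `K̃ᵐ = φ⁽ⁿ⁾(Kⁿ)` given `M_A⁽ⁿ⁾` from uniform, conditioned on
the event that the joint type of `(Kⁿ, Zⁿ)` is `p_{K̄Z̄}`. -/
def zeta {X Z M : Type} [Field X] [Fintype X] [Fintype Z] [Fintype M] {n m : ℕ}
    (A : Matrix (Fin n) (Fin m) X) (b : Fin m → X) (φA : (Fin n → Z) → M)
    (pK : X → ℝ) (W : X → Z → ℝ) (pbar : X × Z → ℝ) : ℝ :=
  let PE : ℝ := ∑ k : Fin n → X, ∑ z : Fin n → Z,
    if jointType k z = pbar then muKZ pK W k z else 0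
  let J : (Fin m → X) × M → ℝ := fun ca =>
    (∑ k : Fin n → X, ∑ z : Fin n → Z,
      if jointType k z = pbar ∧ affEnc A b k = ca.1 ∧ φA z = ca.2
      then muKZ pK W k z else 0) / PE
  ∑ ca : (Fin m → X) × M,
    J ca * Real.log (J ca / (∑ c', J (c', ca.2)) * (Fintype.card X : ℝ) ^ m)

/-! ### Auxiliary development for STATEMENT 0 -/

section AuxProof

variable {X Z : Type} [Fintype X] [Fintype Z]

/-- The `Z`-marginal `p_Z`. -/
def pZm (pK : X → ℝ) (W : X → Z → ℝ) : Z → ℝ := fun z => ∑ k, pK k * W k z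

/-- The reverse channel `T(k|z) = p_{K|Z}(k|z)` (uniform where `p_Z(z)=0`). -/
def Tm (pK : X → ℝ) (W : X → Z → ℝ) : Z → X → ℝ := fun z k =>
  if pZm pK W z = 0 then (Fintype.card X : ℝ)⁻¹ else pK k * W k z / pZm pK W z

/-- Push a distribution on `Z` through the reverse channel. -/
def smap (pK : X → ℝ) (W : X → Z → ℝ) (ρ : Z → ℝ) : X → ℝ :=
  fun k => ∑ z, ρ z * Tm pK W z k

/-- `b`-functional: entropy of the pushforward. -/
def bF (pK : X → ℝ) (W : X → Z → ℝ) (ρ : Z → ℝ) : ℝ := ent (smap pK W ρ)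

/-- A weighted family of distributions on `Z` averaging to `p_Z`. -/
def GoodWR (pK : X → ℝ) (W : X → Z → ℝ) {J : Type} [Fintype J]
    (w : J → ℝ) (r : J → Z → ℝ) : Prop :=
  (∀ j, 0 ≤ w j) ∧ (∀ j, IsDist (r j)) ∧ (∀ z, ∑ j, w j * r j z = pZm pK W z)

/-- The canonical Markov joint distribution built from `(w, r)`. -/
def mkQ (pK : X → ℝ) (W : X → Z → ℝ) {J : Type} [Fintype J]
    (w : J → ℝ) (r : J → Z → ℝ) : J × Z × X → ℝ :=
  fun p => w p.1 * r p.1 p.2.1 * Tm pK W p.2.1 p.2.2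

variable {pK : X → ℝ} {W : X → Z → ℝ}

lemma pZm_nonneg (hK : IsDist pK) (hW : IsChannel W) (z : Z) : 0 ≤ pZm pK W z :=
  Finset.sum_nonneg fun k _ => mul_nonneg (hK.1 k) ((hW k).1 z)

lemma pZm_isDist (hK : IsDist pK) (hW : IsChannel W) : IsDist (pZm pK W) := by
  refine ⟨pZm_nonneg hK hW, ?_⟩
  have : ∀ k, ∑ z, pK k * W k z = pK k := by
    intro k
    rw [← Finset.mul_sum, (hW k).2, mul_one]
  calc ∑ z, pZm pK W z = ∑ k, ∑ z, pK k * W k z := Finset.sum_comm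
    _ = ∑ k, pK k := Finset.sum_congr rfl fun k _ => this k
    _ = 1 := hK.2

lemma pZm_zero (hK : IsDist pK) (hW : IsChannel W) {z : Z} (hz : pZm pK W z = 0)
    (k : X) : pK k * W k z = 0 := by
  have := (Finset.sum_eq_zero_iff_of_nonneg
    (fun k _ => mul_nonneg (hK.1 k) ((hW k).1 z))).mp hz
  exact this k (Finset.mem_univ k)

lemma Tm_nonneg (hK : IsDist pK) (hW : IsChannel W) (z : Z) (k : X) :
    0 ≤ Tm pK W z k := by
  unfold Tm
  split_ifs with h
  · positivity
  · have h0 := pZm_nonneg hK hW (W := W) z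
    exact div_nonneg (mul_nonneg (hK.1 k) ((hW k).1 z)) h0

lemma Tm_sum_one [Nonempty X] (hK : IsDist pK) (hW : IsChannel W) (z : Z) :
    ∑ k, Tm pK W z k = 1 := by
  unfold Tm
  split_ifs with h
  · rw [Finset.sum_const, Finset.card_univ, nsmul_eq_mul]
    rw [mul_inv_cancel₀]
    exact_mod_cast Fintype.card_ne_zero
  · rw [← Finset.sum_div]
    rw [show ∑ k, pK k * W k z = pZm pK W z from rfl, div_self h]

lemma pZm_mul_Tm (hK : IsDist pK) (hW : IsChannel W) (z : Z) (k : X) :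
    pZm pK W z * Tm pK W z k = pK k * W k z := by
  unfold Tm
  split_ifs with h
  · rw [h, zero_mul, (pZm_zero hK hW h k).symm]
  · field_simp

lemma smap_isDist [Nonempty X] (hK : IsDist pK) (hW : IsChannel W) {ρ : Z → ℝ}
    (hρ : IsDist ρ) : IsDist (smap pK W ρ) := by
  constructor
  · intro k
    exact Finset.sum_nonneg fun z _ => mul_nonneg (hρ.1 z) (Tm_nonneg hK hW z k)
  · unfold smap
    rw [Finset.sum_comm]
    calc ∑ z, ∑ k, ρ z * Tm pK W z k = ∑ z, ρ z * ∑ k, Tm pK W z k := by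
          exact Finset.sum_congr rfl fun z _ => (Finset.mul_sum _ _ _).symm
      _ = ∑ z, ρ z := by
          exact Finset.sum_congr rfl fun z _ => by rw [Tm_sum_one hK hW, mul_one]
      _ = 1 := hρ.2

section WithJ

variable {J : Type} [Fintype J] {w : J → ℝ} {r : J → Z → ℝ}

lemma GoodWR.sum_one (hK : IsDist pK) (hW : IsChannel W) (h : GoodWR pK W w r) :
    ∑ j, w j = 1 := by
  have : ∀ j, w j = ∑ z, w j * r j z := by
    intro j
    rw [← Finset.mul_sum, (h.2.1 j).2, mul_one]
  calc ∑ j, w j = ∑ j, ∑ z, w j * r j z := Finset.sum_congr rfl fun j _ => this j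
    _ = ∑ z, ∑ j, w j * r j z := Finset.sum_comm
    _ = ∑ z, pZm pK W z := Finset.sum_congr rfl fun z _ => h.2.2 z
    _ = 1 := (pZm_isDist hK hW).2

/-- Two-level entropy (chain rule / grouping). -/
lemma ent_two_level {A : Type} [Fintype A] (v : J → A → ℝ)
    (hv : ∀ j, ∑ a, v j a = 1) (u : J → ℝ) :
    ∑ j, ∑ a, Real.negMulLog (u j * v j a) = ent u + ∑ j, u j * ent (v j) := by
  have key : ∀ j, ∑ a, Real.negMulLog (u j * v j a)
      = Real.negMulLog (u j) + u j * ent (v j) := by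
    intro j
    have : ∀ a, Real.negMulLog (u j * v j a)
        = v j a * Real.negMulLog (u j) + u j * Real.negMulLog (v j a) := fun a =>
      Real.negMulLog_mul (u j) (v j a)
    rw [Finset.sum_congr rfl fun a _ => this a, Finset.sum_add_distrib,
      ← Finset.sum_mul, hv j, one_mul, ← Finset.mul_sum]
    rfl
  rw [Finset.sum_congr rfl fun j _ => key j, Finset.sum_add_distrib]
  rfl

variable [Nonempty X]

lemma mkQ_margUZ (hK : IsDist pK) (hW : IsChannel W) (h : GoodWR pK W w r)
    (j : J) (z : Z) : margUZ (mkQ pK W w r) (j, z) = w j * r j z := by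
  unfold margUZ mkQ
  simp only
  rw [← Finset.mul_sum, Tm_sum_one hK hW, mul_one]

lemma mkQ_margZK (hK : IsDist pK) (hW : IsChannel W) (h : GoodWR pK W w r)
    (z : Z) (k : X) : margZK (mkQ pK W w r) (z, k) = pK k * W k z := by
  unfold margZK mkQ
  simp only
  rw [← Finset.sum_mul, h.2.2 z, pZm_mul_Tm hK hW]

lemma mkQ_margZ (hK : IsDist pK) (hW : IsChannel W) (h : GoodWR pK W w r)
    (z : Z) : margZ (mkQ pK W w r) z = pZm pK W z := by
  unfold margZ
  calc ∑ j, ∑ k, mkQ pK W w r (j, z, k)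
      = ∑ j, margUZ (mkQ pK W w r) (j, z) := rfl
    _ = ∑ j, w j * r j z := Finset.sum_congr rfl fun j _ => mkQ_margUZ hK hW h j z
    _ = pZm pK W z := h.2.2 z

lemma mkQ_isDist (hK : IsDist pK) (hW : IsChannel W) (h : GoodWR pK W w r) :
    IsDist (mkQ pK W w r) := by
  constructor
  · rintro ⟨j, z, k⟩
    exact mul_nonneg (mul_nonneg (h.1 j) ((h.2.1 j).1 z)) (Tm_nonneg hK hW z k)
  · rw [Fintype.sum_prod_type]
    have : ∀ j, ∑ p : Z × X, mkQ pK W w r (j, p.1, p.2) = w j := by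
      intro j
      rw [Fintype.sum_prod_type]
      calc ∑ z, ∑ k, mkQ pK W w r (j, z, k)
          = ∑ z, margUZ (mkQ pK W w r) (j, z) := rfl
        _ = ∑ z, w j * r j z := Finset.sum_congr rfl fun z _ => mkQ_margUZ hK hW h j z
        _ = w j := by rw [← Finset.mul_sum, (h.2.1 j).2, mul_one]
    rw [Finset.sum_congr rfl fun j _ => this j]
    exact h.sum_one hK hW

lemma mkQ_markov (hK : IsDist pK) (hW : IsChannel W) (h : GoodWR pK W w r) :
    Markov (mkQ pK W w r) := by
  intro j z k
  rw [mkQ_margZ hK hW h, mkQ_margUZ hK hW h, mkQ_margZK hK hW h,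
    ← pZm_mul_Tm hK hW (pK := pK) (W := W) z k]
  show w j * r j z * Tm pK W z k * pZm pK W z = w j * r j z * (pZm pK W z * Tm pK W z k)
  ring

lemma mkQ_mutInfo (hK : IsDist pK) (hW : IsChannel W) (h : GoodWR pK W w r) :
    mutInfo (margUZ (mkQ pK W w r)) = ent (pZm pK W) - ∑ j, w j * ent (r j) := by
  have hUZ : ∀ j z, margUZ (mkQ pK W w r) (j, z) = w j * r j z :=
    fun j z => mkQ_margUZ hK hW h j z
  have hfst : fst2 (margUZ (mkQ pK W w r)) = w := by
    funext j
    unfold fst2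
    rw [Finset.sum_congr rfl fun z _ => hUZ j z, ← Finset.mul_sum, (h.2.1 j).2, mul_one]
  have hsnd : snd2 (margUZ (mkQ pK W w r)) = pZm pK W := by
    funext z
    unfold snd2
    rw [Finset.sum_congr rfl fun j _ => hUZ j z, h.2.2 z]
  have hent : ent (margUZ (mkQ pK W w r)) = ent w + ∑ j, w j * ent (r j) := by
    calc ent (margUZ (mkQ pK W w r)) = ∑ j, ∑ z, Real.negMulLog (w j * r j z) := by
          simp only [ent]
          rw [Fintype.sum_prod_type]
          exact Finset.sum_congr rfl fun j _ => Finset.sum_congr rfl fun z _ => by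
            rw [hUZ j z]
      _ = ent w + ∑ j, w j * ent (r j) := ent_two_level r (fun j => (h.2.1 j).2) w
  unfold mutInfo
  rw [hfst, hsnd, hent]
  ring

lemma mkQ_condEnt (hK : IsDist pK) (hW : IsChannel W) (h : GoodWR pK W w r) :
    condEnt (margUK (mkQ pK W w r)) = ∑ j, w j * bF pK W (r j) := by
  have hUK : ∀ j k, margUK (mkQ pK W w r) (j, k) = w j * smap pK W (r j) k := by
    intro j k
    unfold margUK mkQ smap
    simp only
    rw [Finset.mul_sum]
    exact Finset.sum_congr rfl fun z _ => by ring
  have hsum1 : ∀ j, ∑ k, smap pK W (r j) k = 1 :=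
    fun j => (smap_isDist hK hW (h.2.1 j)).2
  have hfst : fst2 (margUK (mkQ pK W w r)) = w := by
    funext j
    unfold fst2
    rw [Finset.sum_congr rfl fun k _ => hUK j k, ← Finset.mul_sum, hsum1 j, mul_one]
  have hent : ent (margUK (mkQ pK W w r))
      = ent w + ∑ j, w j * ent (smap pK W (r j)) := by
    calc ent (margUK (mkQ pK W w r))
        = ∑ j, ∑ k, Real.negMulLog (w j * smap pK W (r j) k) := by
          simp only [ent]
          rw [Fintype.sum_prod_type]
          exact Finset.sum_congr rfl fun j _ => Finset.sum_congr rfl fun k _ => by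
            rw [hUK j k]
      _ = ent w + ∑ j, w j * ent (smap pK W (r j)) :=
          ent_two_level (fun j => smap pK W (r j)) hsum1 w
  unfold condEnt bF
  rw [hfst, hent]
  ring

end WithJ

end AuxProof
section Aux2

variable {X Z : Type} [Fintype X] [Fintype Z]
variable {pK : X → ℝ} {W : X → Z → ℝ}

/-- Restriction of a weighted sum to the support (subtype version). -/
lemma sum_support_subtype {J : Type} [Fintype J] (w : J → ℝ) (F : J → ℝ) :
    ∑ j : {j : J // w j ≠ 0}, w j.1 * F j.1 = ∑ j : J, w j * F j := by
  classical
  have h1 : ∑ j ∈ Finset.univ.filter (fun j => w j ≠ 0), w j * F j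
      = ∑ j, w j * F j := by
    refine Finset.sum_filter_of_ne fun x _ hx hw => hx ?_
    rw [hw, zero_mul]
  have h2 : ∑ j ∈ Finset.univ.filter (fun j => w j ≠ 0), w j * F j
      = ∑ j : {j : J // w j ≠ 0}, w j.1 * F j.1 :=
    Finset.sum_subtype _ (fun x => by simp) _
  rw [← h2, h1]

/-- Summing a support-extended function. -/
lemma sum_extend {J : Type} [Fintype J] (w : J → ℝ)
    (v : {j : J // w j ≠ 0} → ℝ) (F : J → ℝ) :
    ∑ j : J, (if hj : w j ≠ 0 then v ⟨j, hj⟩ else 0) * F j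
      = ∑ s : {j : J // w j ≠ 0}, v s * F s.1 := by
  classical
  have h1 : ∑ j ∈ Finset.univ.filter (fun j => w j ≠ 0),
        (if hj : w j ≠ 0 then v ⟨j, hj⟩ else 0) * F j
      = ∑ j : J, (if hj : w j ≠ 0 then v ⟨j, hj⟩ else 0) * F j := by
    refine Finset.sum_filter_of_ne fun x _ hx => ?_
    by_contra hw
    rw [dif_neg (not_not_intro hw), zero_mul] at hx
    exact hx rfl
  have h2 : ∑ j ∈ Finset.univ.filter (fun j => w j ≠ 0),
        (if hj : w j ≠ 0 then v ⟨j, hj⟩ else 0) * F j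
      = ∑ s : {j : J // w j ≠ 0}, (if hj : w s.1 ≠ 0 then v ⟨s.1, hj⟩ else 0) * F s.1 :=
    Finset.sum_subtype _ (fun x => by simp) _
  rw [← h1, h2]
  refine Finset.sum_congr rfl fun s _ => ?_
  rw [dif_pos s.2]

/-- Representation: every admissible joint distribution has the canonical form. -/
lemma rep {m : ℕ} (hK : IsDist pK) (hW : IsChannel W) {q : Fin m × Z × X → ℝ}
    (hq : IsDist q) (hM : Markov q) (hmarg : ∀ z k, margZK q (z, k) = pK k * W k z) :
    ∃ (w : Fin m → ℝ) (r : Fin m → Z → ℝ), GoodWR pK W w r ∧ q = mkQ pK W w r := by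
  classical
  set w : Fin m → ℝ := fun u => ∑ z, ∑ k, q (u, z, k) with hwdef
  set r : Fin m → Z → ℝ := fun u z =>
    if w u = 0 then pZm pK W z else (∑ k, q (u, z, k)) / w u with hrdef
  have hq0 : ∀ u z k, 0 ≤ q (u, z, k) := fun u z k => hq.1 _
  have hUZn : ∀ u z, 0 ≤ ∑ k, q (u, z, k) :=
    fun u z => Finset.sum_nonneg fun k _ => hq0 u z k
  have hwn : ∀ u, 0 ≤ w u := fun u => Finset.sum_nonneg fun z _ => hUZn u z
  have hw0 : ∀ u z, w u = 0 → ∑ k, q (u, z, k) = 0 := by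
    intro u z hu
    have := (Finset.sum_eq_zero_iff_of_nonneg (fun z _ => hUZn u z)).mp hu
    exact this z (Finset.mem_univ z)
  have hmZ : ∀ z, margZ q z = pZm pK W z := by
    intro z
    unfold margZ pZm
    rw [Finset.sum_comm]
    exact Finset.sum_congr rfl fun k _ => hmarg z k
  have hz0 : ∀ z, pZm pK W z = 0 → ∀ u k, q (u, z, k) = 0 := by
    intro z hz u k
    have h1 : margZ q z = 0 := by rw [hmZ z, hz]
    have h2 := (Finset.sum_eq_zero_iff_of_nonneg
      (fun u _ => hUZn u z)).mp h1 u (Finset.mem_univ u)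
    exact (Finset.sum_eq_zero_iff_of_nonneg (fun k _ => hq0 u z k)).mp h2 k
      (Finset.mem_univ k)
  have hrpos : ∀ u z, w u ≠ 0 → r u z = (∑ k, q (u, z, k)) / w u :=
    fun u z hu => if_neg hu
  have hrzero : ∀ u z, w u = 0 → r u z = pZm pK W z := fun u z hu => if_pos hu
  have key : ∀ u z k, q (u, z, k) = w u * r u z * Tm pK W z k := by
    intro u z k
    by_cases hz : pZm pK W z = 0
    · have hr0 : r u z = 0 := by
        by_cases hu : w u = 0
        · rw [hrzero u z hu]; exact hz
        · rw [hrpos u z hu, Finset.sum_eq_zero fun k' _ => hz0 z hz u k', zero_div]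
      rw [hz0 z hz u k, hr0, mul_zero, zero_mul]
    · have hTm : Tm pK W z k = pK k * W k z / pZm pK W z := if_neg hz
      have hMk : q (u, z, k) * pZm pK W z = (∑ k', q (u, z, k')) * (pK k * W k z) := by
        have h1 := hM u z k
        rw [hmZ z, hmarg z k] at h1
        exact h1
      by_cases hu : w u = 0
      · have h2 : q (u, z, k) = 0 := by
          have h3 := hw0 u z hu
          have h4 : q (u, z, k) * pZm pK W z = 0 := by rw [hMk, h3, zero_mul]
          rcases mul_eq_zero.mp h4 with h | h
          · exact h
          · exact absurd h hz
        rw [h2, hu, zero_mul, zero_mul]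
      · rw [hrpos u z hu, hTm]
        field_simp
        linear_combination hMk
  have hgood : GoodWR pK W w r := by
    refine ⟨hwn, ?_, ?_⟩
    · intro u
      by_cases hu : w u = 0
      · have : r u = pZm pK W := by funext z; exact hrzero u z hu
        rw [this]; exact pZm_isDist hK hW
      · constructor
        · intro z
          rw [hrpos u z hu]
          exact div_nonneg (hUZn u z) (hwn u)
        · rw [Finset.sum_congr rfl fun z _ => hrpos u z hu, ← Finset.sum_div]
          exact div_self hu
    · intro z
      have hterm : ∀ u, w u * r u z = ∑ k, q (u, z, k) := by
        intro u
        by_cases hu : w u = 0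
        · rw [hu, zero_mul, (hw0 u z hu)]
        · rw [hrpos u z hu]
          field_simp
      rw [Finset.sum_congr rfl fun u _ => hterm u]
      exact hmZ z
  refine ⟨w, r, hgood, ?_⟩
  funext p
  obtain ⟨u, z, k⟩ := p
  exact key u z k

end Aux2
section Aux3

variable {X Z : Type} [Fintype X] [Fintype Z]
variable {pK : X → ℝ} {W : X → Z → ℝ}

/-- Transfer a weighted family along an injection. -/
lemma transfer (hK : IsDist pK) (hW : IsChannel W) {J : Type} [Fintype J]
    {w : J → ℝ} {r : J → Z → ℝ} (h : GoodWR pK W w r) {N : ℕ}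
    (f : J → Fin N) (hf : Function.Injective f) :
    ∃ (w' : Fin N → ℝ) (r' : Fin N → Z → ℝ), GoodWR pK W w' r' ∧
      ∀ G : (Z → ℝ) → ℝ, ∑ u, w' u * G (r' u) = ∑ j, w j * G (r j) := by
  classical
  set w' : Fin N → ℝ := fun u => if h : ∃ j, f j = u then w h.choose else 0 with hw'
  set r' : Fin N → Z → ℝ :=
    fun u => if h : ∃ j, f j = u then r h.choose else pZm pK W with hr'
  have hwf : ∀ j : J, w' (f j) = w j := by
    intro j
    have hex : ∃ j', f j' = f j := ⟨j, rfl⟩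
    have : w' (f j) = w hex.choose := dif_pos hex
    rw [this, hf hex.choose_spec]
  have hrf : ∀ j : J, r' (f j) = r j := by
    intro j
    have hex : ∃ j', f j' = f j := ⟨j, rfl⟩
    have : r' (f j) = r hex.choose := dif_pos hex
    rw [this, hf hex.choose_spec]
  have key : ∀ G : (Z → ℝ) → ℝ, ∑ u, w' u * G (r' u) = ∑ j, w j * G (r j) := by
    intro G
    have h1 : ∑ u ∈ Finset.univ.image f, w' u * G (r' u)
        = ∑ u, w' u * G (r' u) := by
      refine Finset.sum_subset (Finset.subset_univ _) fun u _ hu => ?_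
      have : ¬∃ j, f j = u := by
        intro ⟨j, hj⟩
        exact hu (Finset.mem_image.mpr ⟨j, Finset.mem_univ j, hj⟩)
      rw [show w' u = 0 from dif_neg this, zero_mul]
    have h2 : ∑ u ∈ Finset.univ.image f, w' u * G (r' u)
        = ∑ j, w' (f j) * G (r' (f j)) :=
      Finset.sum_image fun j _ j' _ e => hf e
    rw [← h1, h2]
    exact Finset.sum_congr rfl fun j _ => by rw [hwf j, hrf j]
  refine ⟨w', r', ⟨?_, ?_, ?_⟩, key⟩
  · intro u
    by_cases hu : ∃ j, f j = u
    · rw [show w' u = w hu.choose from dif_pos hu]; exact h.1 _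
    · rw [show w' u = 0 from dif_neg hu]
  · intro u
    by_cases hu : ∃ j, f j = u
    · rw [show r' u = r hu.choose from dif_pos hu]; exact h.2.1 _
    · rw [show r' u = pZm pK W from dif_neg hu]; exact pZm_isDist hK hW
  · intro z
    exact (key fun ρ => ρ z).trans (h.2.2 z)

/-- Support-reduction step: if the support is too big, shrink it while keeping
the marginal, the `a`-value, and not increasing the `b`-value. -/
lemma exchange (hK : IsDist pK) (hW : IsChannel W) {J : Type} [Fintype J]
    {w : J → ℝ} {r : J → Z → ℝ} (h : GoodWR pK W w r)
    (hcard : Fintype.card Z + 2 ≤ (Finset.univ.filter (fun j => w j ≠ 0)).card) :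
    ∃ w₂ : J → ℝ, GoodWR pK W w₂ r ∧
      (Finset.univ.filter (fun j => w₂ j ≠ 0)).card
        < (Finset.univ.filter (fun j => w j ≠ 0)).card ∧
      ∑ j, w₂ j * ent (r j) = ∑ j, w j * ent (r j) ∧
      ∑ j, w₂ j * bF pK W (r j) ≤ ∑ j, w j * bF pK W (r j) := by
  classical
  set S := {j : J // w j ≠ 0}
  have hcardS : Fintype.card Z + 2 ≤ Fintype.card S := by
    rw [Fintype.card_subtype]
    exact hcard
  -- the constraint map
  set Φ : (S → ℝ) →ₗ[ℝ] (Z → ℝ) × ℝ :=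
    { toFun := fun v => (fun z => ∑ s, v s * r s.1 z, ∑ s, v s * ent (r s.1))
      map_add' := by
        intro v₁ v₂
        refine Prod.ext ?_ ?_
        · funext z
          simp [add_mul, Finset.sum_add_distrib]
        · simp [add_mul, Finset.sum_add_distrib]
      map_smul' := by
        intro c v
        refine Prod.ext ?_ ?_
        · funext z
          simp [Finset.mul_sum, mul_assoc]
        · simp [Finset.mul_sum, mul_assoc] } with hΦ
  have hnotinj : ¬Function.Injective Φ := by
    intro hinj
    have hle := LinearMap.finrank_le_finrank_of_injective hinj
    rw [Module.finrank_fintype_fun_eq_card, Module.finrank_prod,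
      Module.finrank_fintype_fun_eq_card, Module.finrank_self] at hle
    omega
  obtain ⟨v₁, v₂, hv12, hvne⟩ := Function.not_injective_iff.mp hnotinj
  set v : S → ℝ := v₁ - v₂ with hv
  have hΦv : Φ v = 0 := by rw [hv, map_sub, hv12, sub_self]
  have hvne0 : v ≠ 0 := sub_ne_zero.mpr hvne
  set d : J → ℝ := fun j => if hj : w j ≠ 0 then v ⟨j, hj⟩ else 0 with hd
  have hdr : ∀ z, ∑ j, d j * r j z = 0 := by
    intro z
    rw [sum_extend w v (fun j => r j z)]
    have := congrFun (congrArg Prod.fst hΦv) z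
    exact this
  have hda : ∑ j, d j * ent (r j) = 0 := by
    rw [sum_extend w v (fun j => ent (r j))]
    exact congrArg Prod.snd hΦv
  have hd0 : ∀ j, w j = 0 → d j = 0 :=
    fun j hj => dif_neg (not_not_intro hj)
  have hdsum : ∑ j, d j = 0 := by
    calc ∑ j, d j = ∑ j, ∑ z, d j * r j z := by
          refine Finset.sum_congr rfl fun j _ => ?_
          rw [← Finset.mul_sum, (h.2.1 j).2, mul_one]
      _ = ∑ z, ∑ j, d j * r j z := Finset.sum_comm
      _ = 0 := by simp [hdr]
  have hdne : d ≠ 0 := by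
    obtain ⟨s, hs⟩ := Function.ne_iff.mp hvne0
    intro hd0'
    apply hs
    have : d s.1 = 0 := congrFun hd0' s.1
    rwa [show d s.1 = v s from by rw [hd]; simp only [dif_pos s.2]; rfl] at this
  -- choose the sign so that the b-value does not increase
  obtain ⟨e, her, hea, he0, hene, hesum, heb⟩ :
      ∃ e : J → ℝ, (∀ z, ∑ j, e j * r j z = 0) ∧ (∑ j, e j * ent (r j) = 0) ∧
        (∀ j, w j = 0 → e j = 0) ∧ e ≠ 0 ∧ (∑ j, e j = 0) ∧
        ∑ j, e j * bF pK W (r j) ≤ 0 := by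
    by_cases hb : ∑ j, d j * bF pK W (r j) ≤ 0
    · exact ⟨d, hdr, hda, hd0, hdne, hdsum, hb⟩
    · refine ⟨-d, ?_, ?_, ?_, ?_, ?_, ?_⟩
      · intro z; simp [neg_mul, Finset.sum_neg_distrib, hdr z]
      · simp [neg_mul, Finset.sum_neg_distrib, hda]
      · intro j hj; simp [hd0 j hj]
      · simpa using hdne
      · simp [Finset.sum_neg_distrib, hdsum]
      · simp only [Pi.neg_apply, neg_mul, Finset.sum_neg_distrib]
        linarith
  have hneg : ∃ j, e j < 0 := by
    by_contra hno
    push_neg at hno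
    have : ∀ j ∈ Finset.univ, e j = 0 :=
      (Finset.sum_eq_zero_iff_of_nonneg fun j _ => hno j).mp hesum
    exact hene (funext fun j => this j (Finset.mem_univ j))
  set Sneg := Finset.univ.filter (fun j => e j < 0) with hSneg
  have hSne : Sneg.Nonempty := by
    obtain ⟨j, hj⟩ := hneg
    exact ⟨j, Finset.mem_filter.mpr ⟨Finset.mem_univ j, hj⟩⟩
  obtain ⟨j₀, hj₀S, hmin⟩ := Finset.exists_min_image Sneg (fun j => w j / (-e j)) hSne
  have hej₀ : e j₀ < 0 := (Finset.mem_filter.mp hj₀S).2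
  have hwj₀ : 0 < w j₀ := by
    rcases (h.1 j₀).lt_or_eq with hlt | heq
    · exact hlt
    · exact absurd (he0 j₀ heq.symm) (by linarith)
  set t := w j₀ / (-e j₀) with htdef
  have ht : 0 < t := div_pos hwj₀ (by linarith)
  set w₂ : J → ℝ := fun j => w j + t * e j with hw₂
  have hw₂n : ∀ j, 0 ≤ w₂ j := by
    intro j
    by_cases hj : e j < 0
    · have h1 : t ≤ w j / (-e j) :=
        hmin j (Finset.mem_filter.mpr ⟨Finset.mem_univ j, hj⟩)
      have h2 : t * (-e j) ≤ w j := (le_div_iff₀ (by linarith)).mp h1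
      show 0 ≤ w j + t * e j
      nlinarith
    · push_neg at hj
      exact add_nonneg (h.1 j) (mul_nonneg ht.le (by linarith))
  have hgood₂ : GoodWR pK W w₂ r := by
    refine ⟨hw₂n, h.2.1, fun z => ?_⟩
    have : ∀ j, w₂ j * r j z = w j * r j z + t * (e j * r j z) := by
      intro j; show (w j + t * e j) * r j z = _; ring
    rw [Finset.sum_congr rfl fun j _ => this j, Finset.sum_add_distrib,
      ← Finset.mul_sum, her z, mul_zero, add_zero]
    exact h.2.2 z
  have hsub : Finset.univ.filter (fun j => w₂ j ≠ 0)
      ⊆ Finset.univ.filter (fun j => w j ≠ 0) := by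
    intro j hj
    rw [Finset.mem_filter] at hj ⊢
    refine ⟨Finset.mem_univ j, fun hwj => hj.2 ?_⟩
    show w j + t * e j = 0
    rw [hwj, he0 j hwj, mul_zero, add_zero]
  have hj₀w : j₀ ∈ Finset.univ.filter (fun j => w j ≠ 0) :=
    Finset.mem_filter.mpr ⟨Finset.mem_univ j₀, by linarith⟩
  have hj₀w₂ : j₀ ∉ Finset.univ.filter (fun j => w₂ j ≠ 0) := by
    rw [Finset.mem_filter]
    rintro ⟨-, hne⟩
    apply hne
    show w j₀ + t * e j₀ = 0
    have hne0 : e j₀ ≠ 0 := ne_of_lt hej₀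
    rw [htdef, div_mul_eq_mul_div, mul_div_assoc, div_neg, div_self hne0]
    ring
  have hcardlt : (Finset.univ.filter (fun j => w₂ j ≠ 0)).card
      < (Finset.univ.filter (fun j => w j ≠ 0)).card :=
    Finset.card_lt_card ((Finset.ssubset_iff_of_subset hsub).mpr
      ⟨j₀, hj₀w, hj₀w₂⟩)
  have hsplit : ∀ F : J → ℝ, ∑ j, w₂ j * F j = ∑ j, w j * F j + t * ∑ j, e j * F j := by
    intro F
    rw [Finset.mul_sum, ← Finset.sum_add_distrib]
    refine Finset.sum_congr rfl fun j _ => ?_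
    show (w j + t * e j) * F j = _
    ring
  refine ⟨w₂, hgood₂, hcardlt, ?_, ?_⟩
  · rw [hsplit, hea, mul_zero, add_zero]
  · rw [hsplit]
    have h1 : t * ∑ j, e j * bF pK W (r j) ≤ 0 := by
      have := mul_le_mul_of_nonneg_left heb ht.le
      linarith
    linarith

end Aux3
section Aux4

variable {X Z : Type} [Fintype X] [Fintype Z]
variable {pK : X → ℝ} {W : X → Z → ℝ}

/-- Reduce any weighted family to one indexed by `Fin (|Z| + 1)`, not decreasing
the `a`-value and not increasing the `b`-value. -/
lemma reduce (hK : IsDist pK) (hW : IsChannel W) {J : Type} [Fintype J]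
    {w : J → ℝ} {r : J → Z → ℝ} (h : GoodWR pK W w r) :
    ∃ (w' : Fin (Fintype.card Z + 1) → ℝ) (r' : Fin (Fintype.card Z + 1) → Z → ℝ),
      GoodWR pK W w' r' ∧
      ∑ j, w j * ent (r j) ≤ ∑ u, w' u * ent (r' u) ∧
      ∑ u, w' u * bF pK W (r' u) ≤ ∑ j, w j * bF pK W (r j) := by
  classical
  suffices H : ∀ (n : ℕ) (J : Type) [instJ : Fintype J] (w : J → ℝ) (r : J → Z → ℝ),
      GoodWR pK W w r → (Finset.univ.filter (fun j => w j ≠ 0)).card = n →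
      ∃ (w' : Fin (Fintype.card Z + 1) → ℝ) (r' : Fin (Fintype.card Z + 1) → Z → ℝ),
        GoodWR pK W w' r' ∧
        ∑ j, w j * ent (r j) ≤ ∑ u, w' u * ent (r' u) ∧
        ∑ u, w' u * bF pK W (r' u) ≤ ∑ j, w j * bF pK W (r j) by
    exact H _ J w r h rfl
  intro n
  induction n using Nat.strong_induction_on with
  | _ n IH =>
    intro J instJ w r h hn
    by_cases hle : n ≤ Fintype.card Z + 1
    · have hcard : Fintype.card {j : J // w j ≠ 0}
          ≤ Fintype.card (Fin (Fintype.card Z + 1)) := by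
        rw [Fintype.card_fin, Fintype.card_subtype]
        omega
      obtain ⟨f⟩ := Function.Embedding.nonempty_of_card_le hcard
      have hres : GoodWR pK W (fun s : {j : J // w j ≠ 0} => w s.1)
          (fun s => r s.1) :=
        ⟨fun s => h.1 s.1, fun s => h.2.1 s.1,
          fun z => (sum_support_subtype w fun j => r j z).trans (h.2.2 z)⟩
      obtain ⟨w', r', hg, hkey⟩ := transfer hK hW hres f f.injective
      refine ⟨w', r', hg, ?_, ?_⟩
      · exact le_of_eq
          ((hkey ent).trans (sum_support_subtype w fun j => ent (r j))).symm
      · exact le_of_eq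
          ((hkey (bF pK W)).trans (sum_support_subtype w fun j => bF pK W (r j)))
    · have hcard2 : Fintype.card Z + 2
          ≤ (Finset.univ.filter (fun j => w j ≠ 0)).card := by omega
      obtain ⟨w₂, hg₂, hlt, ha, hb⟩ := exchange hK hW h hcard2
      rw [hn] at hlt
      obtain ⟨w', r', hg', ha', hb'⟩ := IH _ hlt J w₂ r hg₂ rfl
      exact ⟨w', r', hg', by linarith, by linarith⟩

/-- Characterization of the region in terms of weighted families. -/
lemma region_iff [Nonempty X] (hK : IsDist pK) (hW : IsChannel W) (x : ℝ × ℝ) :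
    x ∈ Region pK W ↔ (0 ≤ x.1 ∧ 0 ≤ x.2) ∧
      ∃ (w : Fin (Fintype.card Z + 1) → ℝ) (r : Fin (Fintype.card Z + 1) → Z → ℝ),
        GoodWR pK W w r ∧ ent (pZm pK W) - ∑ u, w u * ent (r u) ≤ x.1 ∧
        ∑ u, w u * bF pK W (r u) ≤ x.2 := by
  constructor
  · rintro ⟨m, hm, q, hq, hMark, hmarg, hx1, hx2, hI, hH⟩
    refine ⟨⟨hx1, hx2⟩, ?_⟩
    obtain ⟨w, r, hg, hqeq⟩ := rep hK hW hq hMark hmarg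
    have hIval : mutInfo (margUZ q) = ent (pZm pK W) - ∑ j, w j * ent (r j) := by
      rw [hqeq]; exact mkQ_mutInfo hK hW hg
    have hHval : condEnt (margUK q) = ∑ j, w j * bF pK W (r j) := by
      rw [hqeq]; exact mkQ_condEnt hK hW hg
    obtain ⟨w', r', hg', hkey⟩ :=
      transfer hK hW hg (Fin.castLEEmb hm) (Fin.castLEEmb hm).injective
    refine ⟨w', r', hg', ?_, ?_⟩
    · calc ent (pZm pK W) - ∑ u, w' u * ent (r' u)
          = ent (pZm pK W) - ∑ j, w j * ent (r j) := by rw [hkey ent]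
        _ = mutInfo (margUZ q) := hIval.symm
        _ ≤ x.1 := hI
    · calc ∑ u, w' u * bF pK W (r' u) = ∑ j, w j * bF pK W (r j) := hkey (bF pK W)
        _ = condEnt (margUK q) := hHval.symm
        _ ≤ x.2 := hH
  · rintro ⟨⟨hx1, hx2⟩, w, r, hg, hI, hH⟩
    refine ⟨Fintype.card Z + 1, le_refl _, mkQ pK W w r, mkQ_isDist hK hW hg,
      mkQ_markov hK hW hg, fun z k => mkQ_margZK hK hW hg z k, hx1, hx2, ?_, ?_⟩
    · rw [mkQ_mutInfo hK hW hg]; exact hI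
    · rw [mkQ_condEnt hK hW hg]; exact hH

/-- Combining two weighted families with convex weights. -/
lemma combine {N : ℕ} {w₁ w₂ : Fin N → ℝ} {r₁ r₂ : Fin N → Z → ℝ}
    (h₁ : GoodWR pK W w₁ r₁) (h₂ : GoodWR pK W w₂ r₂) {a b : ℝ}
    (ha : 0 ≤ a) (hb : 0 ≤ b) (hab : a + b = 1) :
    GoodWR pK W (Sum.elim (fun j => a * w₁ j) (fun j => b * w₂ j))
        (Sum.elim r₁ r₂) ∧
      ∀ G : (Z → ℝ) → ℝ,
        ∑ j : Fin N ⊕ Fin N,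
            Sum.elim (fun j => a * w₁ j) (fun j => b * w₂ j) j
              * G (Sum.elim r₁ r₂ j)
          = a * (∑ j, w₁ j * G (r₁ j)) + b * (∑ j, w₂ j * G (r₂ j)) := by
  have key : ∀ G : (Z → ℝ) → ℝ,
      ∑ j : Fin N ⊕ Fin N,
          Sum.elim (fun j => a * w₁ j) (fun j => b * w₂ j) j
            * G (Sum.elim r₁ r₂ j)
        = a * (∑ j, w₁ j * G (r₁ j)) + b * (∑ j, w₂ j * G (r₂ j)) := by
    intro G
    rw [Fintype.sum_sum_type]
    simp only [Sum.elim_inl, Sum.elim_inr]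
    rw [Finset.mul_sum, Finset.mul_sum]
    congr 1 <;> exact Finset.sum_congr rfl fun j _ => by ring
  refine ⟨⟨?_, ?_, ?_⟩, key⟩
  · rintro (j | j)
    · exact mul_nonneg ha (h₁.1 j)
    · exact mul_nonneg hb (h₂.1 j)
  · rintro (j | j)
    · exact h₁.2.1 j
    · exact h₂.2.1 j
  · intro z
    have := key (fun ρ => ρ z)
    rw [this, h₁.2.2 z, h₂.2.2 z, ← add_mul, hab, one_mul]

end Aux4
open scoped Pointwise
section Aux5

variable {X Z : Type} [Fintype X] [Fintype Z]
variable {pK : X → ℝ} {W : X → Z → ℝ}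

lemma ent_continuous {A : Type} [Fintype A] : Continuous (ent : (A → ℝ) → ℝ) := by
  unfold ent
  exact continuous_finset_sum _ fun a _ =>
    Real.continuous_negMulLog.comp (continuous_apply a)

lemma bF_continuous : Continuous (bF pK W) := by
  unfold bF
  refine ent_continuous.comp ?_
  unfold smap
  exact continuous_pi fun k => continuous_finset_sum _ fun z _ =>
    (continuous_apply z).mul continuous_const

end Aux5

/-- The region `𝓡(p_K, W)` is a closed convex subset of the nonnegative
quadrant `ℝ₊² = {(R_A, R) : R_A ≥ 0, R ≥ 0}`. -/
theorem region_isClosed_convex_subset_quadrant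
    {X Z : Type} [Field X] [Fintype X] [Fintype Z]
    (pK : X → ℝ) (hK : IsDist pK) (W : X → Z → ℝ) (hW : IsChannel W) :
    IsClosed (Region pK W) ∧ Convex ℝ (Region pK W) ∧
      Region pK W ⊆ {r : ℝ × ℝ | 0 ≤ r.1 ∧ 0 ≤ r.2} := by
  classical
  haveI : Nonempty X := ⟨0⟩
  set SS : Set ((Fin (Fintype.card Z + 1) → ℝ)
      × (Fin (Fintype.card Z + 1) → Z → ℝ)) := {p | GoodWR pK W p.1 p.2} with hSS
  set φm : ((Fin (Fintype.card Z + 1) → ℝ)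
      × (Fin (Fintype.card Z + 1) → Z → ℝ)) → ℝ × ℝ := fun p =>
    (ent (pZm pK W) - ∑ u, p.1 u * ent (p.2 u),
      ∑ u, p.1 u * bF pK W (p.2 u)) with hφ
  set Qd : Set (ℝ × ℝ) := {y | 0 ≤ y.1 ∧ 0 ≤ y.2} with hQd
  -- the region as quadrant ∩ (compact set + quadrant)
  have hreg : Region pK W = Qd ∩ (φm '' SS + Qd) := by
    ext x
    rw [Set.mem_inter_iff, region_iff hK hW x]
    constructor
    · rintro ⟨⟨h1, h2⟩, w, r, hg, hI, hH⟩
      refine ⟨⟨h1, h2⟩, ?_⟩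
      rw [Set.mem_add]
      refine ⟨φm (w, r), Set.mem_image_of_mem _ hg, x - φm (w, r), ⟨?_, ?_⟩, ?_⟩
      · show 0 ≤ (x - φm (w, r)).1
        rw [Prod.fst_sub]
        exact sub_nonneg.mpr hI
      · show 0 ≤ (x - φm (w, r)).2
        rw [Prod.snd_sub]
        exact sub_nonneg.mpr hH
      · exact add_sub_cancel x (φm (w, r)) ▸ by ring
    · rintro ⟨⟨h1, h2⟩, hx⟩
      rw [Set.mem_add] at hx
      obtain ⟨c, hc, y, hy, hcy⟩ := hx
      obtain ⟨⟨w, r⟩, hg, rfl⟩ := hc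
      refine ⟨⟨h1, h2⟩, w, r, hg, ?_, ?_⟩
      · have hx1 : x.1 = (φm (w, r)).1 + y.1 := by rw [← hcy]; rfl
        have : (φm (w, r)).1 = ent (pZm pK W) - ∑ u, w u * ent (r u) := rfl
        rw [hx1, this]
        linarith [hy.1]
      · have hx2 : x.2 = (φm (w, r)).2 + y.2 := by rw [← hcy]; rfl
        have : (φm (w, r)).2 = ∑ u, w u * bF pK W (r u) := rfl
        rw [hx2, this]
        linarith [hy.2]
  have hQdclosed : IsClosed Qd :=
    (isClosed_le continuous_const continuous_fst).inter
      (isClosed_le continuous_const continuous_snd)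
  have hSSclosed : IsClosed SS := by
    have hdec : SS = (⋂ j, {p : (Fin (Fintype.card Z + 1) → ℝ)
          × (Fin (Fintype.card Z + 1) → Z → ℝ) | 0 ≤ p.1 j})
        ∩ ((⋂ j, ⋂ z, {p | 0 ≤ p.2 j z}) ∩ (⋂ j, {p | ∑ z, p.2 j z = 1})
        ∩ (⋂ z, {p | ∑ j, p.1 j * p.2 j z = pZm pK W z})) := by
      ext p
      simp only [hSS, GoodWR, IsDist, Set.mem_inter_iff, Set.mem_iInter,
        Set.mem_setOf_eq]
      exact ⟨fun h => ⟨h.1, ⟨fun j z => (h.2.1 j).1 z, fun j => (h.2.1 j).2⟩, h.2.2⟩,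
        fun h => ⟨h.1, fun j => ⟨h.2.1.1 j, h.2.1.2 j⟩, h.2.2⟩⟩
    rw [hdec]
    have c1 : ∀ j, Continuous fun p : (Fin (Fintype.card Z + 1) → ℝ)
        × (Fin (Fintype.card Z + 1) → Z → ℝ) => p.1 j :=
      fun j => (continuous_apply j).comp continuous_fst
    have c2 : ∀ j z, Continuous fun p : (Fin (Fintype.card Z + 1) → ℝ)
        × (Fin (Fintype.card Z + 1) → Z → ℝ) => p.2 j z :=
      fun j z => (continuous_apply z).comp ((continuous_apply j).comp continuous_snd)
    refine IsClosed.inter (isClosed_iInter fun j =>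
      isClosed_le continuous_const (c1 j)) (IsClosed.inter (IsClosed.inter ?_ ?_) ?_)
    · exact isClosed_iInter fun j => isClosed_iInter fun z =>
        isClosed_le continuous_const (c2 j z)
    · exact isClosed_iInter fun j =>
        isClosed_eq (continuous_finset_sum _ fun z _ => c2 j z) continuous_const
    · exact isClosed_iInter fun z =>
        isClosed_eq (continuous_finset_sum _ fun j _ => (c1 j).mul (c2 j z))
          continuous_const
  have hSSsub : SS ⊆ Set.Icc (0, 0) (1, 1) := by
    intro p hp
    have hp' : GoodWR pK W p.1 p.2 := hp
    constructor
    · constructor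
      · intro j; exact hp'.1 j
      · intro j z; exact (hp'.2.1 j).1 z
    · constructor
      · intro j
        show p.1 j ≤ (1 : ℝ)
        calc p.1 j ≤ ∑ j', p.1 j' :=
              Finset.single_le_sum (fun i _ => hp'.1 i) (Finset.mem_univ j)
          _ = 1 := hp'.sum_one hK hW
      · intro j z
        show p.2 j z ≤ (1 : ℝ)
        calc p.2 j z ≤ ∑ z', p.2 j z' :=
              Finset.single_le_sum (fun i _ => (hp'.2.1 j).1 i) (Finset.mem_univ z)
          _ = 1 := (hp'.2.1 j).2
  have hSScompact : IsCompact SS :=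
    IsCompact.of_isClosed_subset isCompact_Icc hSSclosed hSSsub
  have hφcont : Continuous φm := by
    refine Continuous.prodMk ?_ ?_
    · exact continuous_const.sub (continuous_finset_sum _ fun u _ =>
        ((continuous_apply u).comp continuous_fst).mul
          (ent_continuous.comp ((continuous_apply u).comp continuous_snd)))
    · exact continuous_finset_sum _ fun u _ =>
        ((continuous_apply u).comp continuous_fst).mul
          (bF_continuous.comp ((continuous_apply u).comp continuous_snd))
  have hCcompact : IsCompact (φm '' SS) := hSScompact.image hφcont
  refine ⟨?_, ?_, ?_⟩
  · -- closed
    rw [hreg]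
    exact hQdclosed.inter (hQdclosed.add_left_of_isCompact hCcompact)
  · -- convex
    intro x hx y hy a b ha hb hab
    obtain ⟨⟨hx1, hx2⟩, w₁, r₁, hg₁, hI₁, hH₁⟩ := (region_iff hK hW x).mp hx
    obtain ⟨⟨hy1, hy2⟩, w₂, r₂, hg₂, hI₂, hH₂⟩ := (region_iff hK hW y).mp hy
    obtain ⟨hgc, hkeyc⟩ := combine hg₁ hg₂ ha hb hab
    obtain ⟨w', r', hg', ha', hb'⟩ := reduce hK hW hgc
    have hfst : (a • x + b • y).1 = a * x.1 + b * y.1 := rfl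
    have hsnd : (a • x + b • y).2 = a * x.2 + b * y.2 := rfl
    refine (region_iff hK hW _).mpr ⟨⟨?_, ?_⟩, w', r', hg', ?_, ?_⟩
    · rw [hfst]
      exact add_nonneg (mul_nonneg ha hx1) (mul_nonneg hb hy1)
    · rw [hsnd]
      exact add_nonneg (mul_nonneg ha hx2) (mul_nonneg hb hy2)
    · rw [hfst]
      have hac := hkeyc ent
      rw [hac] at ha'
      have e1 := mul_le_mul_of_nonneg_left hI₁ ha
      have e2 := mul_le_mul_of_nonneg_left hI₂ hb
      have hE : a * ent (pZm pK W) + b * ent (pZm pK W) = ent (pZm pK W) := by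
        rw [← add_mul, hab, one_mul]
      nlinarith [ha', e1, e2, hE]
    · rw [hsnd]
      have hbc := hkeyc (bF pK W)
      rw [hbc] at hb'
      have e1 := mul_le_mul_of_nonneg_left hH₁ ha
      have e2 := mul_le_mul_of_nonneg_left hH₂ hb
      nlinarith [hb', e1, e2]
  · -- subset of quadrant
    intro x hx
    exact ((region_iff hK hW x).mp hx).1

end

end SCA
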